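/- Let μ be a finite positive Borel measure on ℝ × ℝ^d, let ν be a finite positive Borel measure on ℝ, and let (μ_t)_{t∈ℝ} be a disintegration of μ with respect to the time projection t and ν; that is: for every φ ∈ C_c(ℝ × ℝ^d) the map t ↦ ∫ φ dμ_t is Borel, for ν-a.e. t the measure μ_t is a finite measure concentrated on {t} × ℝ^d, and μ(A) = ∫_ℝ μ_t(A) dν(t) for every Borel set A ⊆ ℝ × ℝ^d. Then for ν-a.e. t ∈ ℝ one has: ν((t−h, t+h)) > 0 for all h > 0, and for every φ ∈ C_c(ℝ × ℝ^d), ∫ φ dμ_t = lim_{h→0⁺} ( ∫_{(t−h,t+h)×ℝ^d} φ dμ ) / ν((t−h,t+h)). In other words, the restrictions μ restricted to (t−h,t+h)×ℝ^d, normalized by ν((t−h,t+h)), converge weakly to μ_t as h → 0. -/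

import Mathlib

set_option linter.unusedSectionVars false
set_option maxHeartbeats 1600000

open MeasureTheory Filter Set
open scoped ENNReal NNReal
open Metric Topology

section Approx
variable {X : Type*} [NormedAddCommGroup X] [ProperSpace X]

noncomputable def cutoff (n : ℕ) (z : X) : ℝ := max 0 (min 1 ((n : ℝ) + 2 - ‖z‖))

lemma cutoff_cont (n : ℕ) : Continuous (cutoff (X := X) n) := by
  unfold cutoff; fun_prop

lemma cutoff_zero (n : ℕ) {z : X} (hz : (n : ℝ) + 2 ≤ ‖z‖) : cutoff n z = 0 := by
  unfold cutoff
  rw [max_eq_left]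
  exact min_le_of_right_le (by linarith)

lemma cutoff_hcs (n : ℕ) : HasCompactSupport (cutoff (X := X) n) := by
  apply HasCompactSupport.intro (isCompact_closedBall (0 : X) ((n : ℝ) + 2))
  intro z hz
  simp only [mem_closedBall, dist_zero_right, not_le] at hz
  exact cutoff_zero n hz.le

lemma cutoff_nonneg (n : ℕ) (z : X) : 0 ≤ cutoff n z := le_max_left _ _

lemma cutoff_le_one (n : ℕ) (z : X) : cutoff n z ≤ 1 :=
  max_le zero_le_one (min_le_left _ _)

lemma cutoff_mono (z : X) : Monotone fun n => cutoff n z := by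
  intro a b hab
  have : (a : ℝ) ≤ b := Nat.cast_le.2 hab
  unfold cutoff
  have h2 : min 1 ((a : ℝ) + 2 - ‖z‖) ≤ min 1 ((b : ℝ) + 2 - ‖z‖) :=
    min_le_min le_rfl (by linarith)
  exact max_le_max le_rfl h2

lemma cutoff_one (z : X) {n : ℕ} (hn : ‖z‖ ≤ (n : ℝ) + 1) : cutoff n z = 1 := by
  unfold cutoff
  rw [min_eq_left (by linarith), max_eq_right zero_le_one]

/-- Approximation of the indicator of an open set by continuous compactly supported functions. -/
lemma approx_open {U : Set X} (hU : IsOpen U) :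
    ∃ φ : ℕ → X → ℝ, (∀ n, Continuous (φ n)) ∧ (∀ n, HasCompactSupport (φ n)) ∧
      (∀ n z, 0 ≤ φ n z) ∧ (∀ n z, φ n z ≤ 1) ∧
      (∀ z, Monotone fun n => φ n z) ∧
      (∀ z, (⨆ n, ENNReal.ofReal (φ n z)) = U.indicator 1 z) := by
  by_cases hUu : U = univ
  · refine ⟨cutoff, cutoff_cont, cutoff_hcs, cutoff_nonneg, cutoff_le_one, cutoff_mono, ?_⟩
    intro z
    subst hUu
    rw [Set.indicator_univ]
    simp only [Pi.one_apply]
    apply le_antisymm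
    · exact iSup_le fun n => ENNReal.ofReal_le_one.2 (cutoff_le_one n z)
    · obtain ⟨n, hn⟩ := exists_nat_ge ‖z‖
      refine le_trans ?_ (le_iSup _ n)
      rw [cutoff_one z (by linarith), ENNReal.ofReal_one]
  · set φ : ℕ → X → ℝ := fun n z => min (cutoff n z) (min 1 ((n : ℝ) * infDist z Uᶜ)) with hφ
    have hcont : ∀ n, Continuous (φ n) := fun n =>
      (cutoff_cont n).min (continuous_const.min ((continuous_const.mul
        (continuous_infDist_pt _))))
    have hnn : ∀ n z, 0 ≤ φ n z := fun n z =>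
      le_min (cutoff_nonneg n z) (le_min zero_le_one
        (mul_nonneg (Nat.cast_nonneg n) Metric.infDist_nonneg))
    refine ⟨φ, hcont, ?_, hnn, ?_, ?_, ?_⟩
    · intro n
      apply HasCompactSupport.intro (isCompact_closedBall (0 : X) ((n : ℝ) + 2))
      intro z hz
      simp only [mem_closedBall, dist_zero_right, not_le] at hz
      have h0 : cutoff n z = 0 := cutoff_zero n hz.le
      have := hnn n z
      have hle : φ n z ≤ 0 := by rw [hφ]; exact min_le_of_left_le h0.le
      linarith
    · intro n z
      exact min_le_of_right_le (min_le_left _ _)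
    · intro z a b hab
      have hc : (a : ℝ) ≤ b := Nat.cast_le.2 hab
      refine le_min (le_trans (min_le_left _ _) (cutoff_mono z hab)) (le_min
        (le_trans (min_le_right _ _) (min_le_left _ _)) ?_)
      refine le_trans (min_le_right _ _) (le_trans (min_le_right _ _) ?_)
      exact mul_le_mul_of_nonneg_right hc Metric.infDist_nonneg
    · intro z
      by_cases hz : z ∈ U
      · rw [Set.indicator_of_mem hz]
        simp only [Pi.one_apply]
        have hd : 0 < infDist z Uᶜ :=
          (hU.isClosed_compl.notMem_iff_infDist_pos (nonempty_compl.2 hUu)).1 (by simpa)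
        apply le_antisymm
        · exact iSup_le fun n =>
            ENNReal.ofReal_le_one.2 (min_le_of_right_le (min_le_left _ _))
        · obtain ⟨n, hn⟩ := exists_nat_ge (max ‖z‖ (infDist z Uᶜ)⁻¹)
          have h1 : ‖z‖ ≤ (n : ℝ) + 1 := le_trans (le_max_left _ _) (by linarith)
          have h2 : 1 ≤ (n : ℝ) * infDist z Uᶜ := by
            have hn' : (infDist z Uᶜ)⁻¹ ≤ (n : ℝ) := le_trans (le_max_right _ _) hn
            have := mul_le_mul_of_nonneg_right hn' hd.le
            rwa [inv_mul_cancel₀ hd.ne'] at this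
          have hone : φ n z = 1 := by
            rw [hφ]
            simp only
            rw [cutoff_one z h1, min_eq_left h2, min_eq_left le_rfl]
          refine le_trans ?_ (le_iSup _ n)
          rw [hone, ENNReal.ofReal_one]
      · rw [Set.indicator_of_notMem hz]
        have h0 : ∀ n, φ n z = 0 := by
          intro n
          have hd : infDist z Uᶜ = 0 := Metric.infDist_zero_of_mem (by simpa using hz)
          rw [hφ]
          simp only [hd, mul_zero]
          rw [min_eq_right zero_le_one, min_eq_right (cutoff_nonneg n z)]
        simp [h0]
end Approx


section Disint
variable {X : Type*} [NormedAddCommGroup X] [ProperSpace X] [MeasurableSpace X] [BorelSpace X]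
  {ν : Measure ℝ} [IsFiniteMeasure ν] {μt : ℝ → Measure X}

lemma aemeas_open
    (hborel : ∀ φ : X → ℝ, Continuous φ → HasCompactSupport φ →
      Measurable fun t => ∫ z, φ z ∂(μt t))
    (hfin : ∀ᵐ t ∂ν, μt t univ < ⊤) {U : Set X} (hU : IsOpen U) :
    AEMeasurable (fun t => μt t U) ν := by
  obtain ⟨φ, hcont, hhcs, hnn, hle1, hmono, hind⟩ := approx_open hU
  have hmeas : Measurable fun t => ⨆ n, ENNReal.ofReal (∫ z, φ n z ∂μt t) :=
    Measurable.iSup fun n => (hborel (φ n) (hcont n) (hhcs n)).ennreal_ofReal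
  refine ⟨_, hmeas, ?_⟩
  filter_upwards [hfin] with t ht
  haveI : IsFiniteMeasure (μt t) := ⟨ht⟩
  have hint : ∀ n, Integrable (φ n) (μt t) := fun n =>
    (hcont n).integrable_of_hasCompactSupport (hhcs n)
  have h1 : ∀ n, ENNReal.ofReal (∫ z, φ n z ∂μt t) = ∫⁻ z, ENNReal.ofReal (φ n z) ∂μt t :=
    fun n => ofReal_integral_eq_lintegral_ofReal (hint n) (Eventually.of_forall (hnn n))
  calc μt t U = ∫⁻ z, U.indicator 1 z ∂μt t := (lintegral_indicator_one hU.measurableSet).symm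
    _ = ∫⁻ z, ⨆ n, ENNReal.ofReal (φ n z) ∂μt t := by
        refine lintegral_congr fun z => (hind z).symm
    _ = ⨆ n, ∫⁻ z, ENNReal.ofReal (φ n z) ∂μt t := by
        refine lintegral_iSup (fun n => (hcont n).measurable.ennreal_ofReal) ?_
        intro a b hab z
        exact ENNReal.ofReal_le_ofReal (hmono z hab)
    _ = ⨆ n, ENNReal.ofReal (∫ z, φ n z ∂μt t) := by simp_rw [h1]

lemma aemeas_set
    (hborel : ∀ φ : X → ℝ, Continuous φ → HasCompactSupport φ →
      Measurable fun t => ∫ z, φ z ∂(μt t))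
    (hfin : ∀ᵐ t ∂ν, μt t univ < ⊤) :
    ∀ ⦃A : Set X⦄, MeasurableSet A → AEMeasurable (fun t => μt t A) ν := by
  refine MeasurableSet.induction_on_open (fun U hU => aemeas_open hborel hfin hU) ?_ ?_
  · intro A hA hC
    have huniv : AEMeasurable (fun t => μt t univ) ν := aemeas_open hborel hfin isOpen_univ
    refine (huniv.sub hC).congr ?_
    filter_upwards [hfin] with t ht
    exact (measure_compl hA ((measure_mono (subset_univ A)).trans_lt ht).ne).symm
  · intro f hdisj hmeas hC
    choose g hg hg' using fun i => hC i
    refine ⟨fun t => ∑' i, g i t, Measurable.ennreal_tsum hg, ?_⟩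
    filter_upwards [eventually_countable_forall.2 hg'] with t ht
    rw [measure_iUnion hdisj hmeas]
    exact tsum_congr fun i => ht i

lemma lint_eq
    (hborel : ∀ φ : X → ℝ, Continuous φ → HasCompactSupport φ →
      Measurable fun t => ∫ z, φ z ∂(μt t))
    (hfin : ∀ᵐ t ∂ν, μt t univ < ⊤)
    (μ : Measure X)
    (hdisint : ∀ A : Set X, MeasurableSet A → μ A = ∫⁻ t, μt t A ∂ν) :
    ∀ ⦃f : X → ℝ≥0∞⦄, Measurable f →
      AEMeasurable (fun t => ∫⁻ z, f z ∂μt t) ν ∧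
      ∫⁻ z, f z ∂μ = ∫⁻ t, ∫⁻ z, f z ∂μt t ∂ν := by
  intro f hf
  refine Measurable.ennreal_induction
    (motive := fun f => AEMeasurable (fun t => ∫⁻ z, f z ∂μt t) ν ∧
      ∫⁻ z, f z ∂μ = ∫⁻ t, ∫⁻ z, f z ∂μt t ∂ν) ?_ ?_ ?_ hf
  · intro c s hs
    have h1 : ∀ (κ : Measure X), ∫⁻ z, s.indicator (fun _ => c) z ∂κ = c * κ s := fun κ =>
      lintegral_indicator_const hs c
    constructor
    · refine ((aemeas_set hborel hfin hs).const_mul c).congr ?_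
      exact Eventually.of_forall fun t => (h1 (μt t)).symm
    · rw [h1, hdisint s hs, ← lintegral_const_mul'' c (aemeas_set hborel hfin hs)]
      exact lintegral_congr fun t => (h1 (μt t)).symm
  · intro f g _ hf hg hPf hPg
    constructor
    · refine (hPf.1.add hPg.1).congr ?_
      refine Eventually.of_forall fun t => ?_
      simp only [Pi.add_apply]
      rw [lintegral_add_left hf]
    · have h1 : ∫⁻ z, (f + g) z ∂μ = ∫⁻ z, f z ∂μ + ∫⁻ z, g z ∂μ := by
        simp only [Pi.add_apply]; exact lintegral_add_left hf g
      rw [h1, hPf.2, hPg.2, ← lintegral_add_left' hPf.1]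
      refine lintegral_congr fun t => ?_
      simp only [Pi.add_apply]
      rw [lintegral_add_left hf]
  · intro f hf hmono hP
    have hpt : ∀ (κ : Measure X), ∫⁻ z, ⨆ n, f n z ∂κ = ⨆ n, ∫⁻ z, f n z ∂κ := fun κ =>
      lintegral_iSup hf hmono
    constructor
    · refine (AEMeasurable.iSup fun n => (hP n).1).congr ?_
      exact Eventually.of_forall fun t => (hpt (μt t)).symm
    · rw [hpt μ]
      have : ∫⁻ t, ∫⁻ z, ⨆ n, f n z ∂μt t ∂ν = ∫⁻ t, ⨆ n, ∫⁻ z, f n z ∂μt t ∂ν :=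
        lintegral_congr fun t => hpt (μt t)
      rw [this, lintegral_iSup' (fun n => (hP n).1) ?_]
      · exact iSup_congr fun n => (hP n).2
      · refine Eventually.of_forall fun t => ?_
        intro a b hab
        exact lintegral_mono fun z => hmono hab z
end Disint


lemma ae_ball_pos (ν : Measure ℝ) [IsFiniteMeasure ν] :
    ∀ᵐ t ∂ν, ∀ h : ℝ, 0 < h → 0 < ν (ball t h) := by
  set N := ⋃ (p : ℚ × ℚ) (_ : ν (Ioo (p.1 : ℝ) (p.2 : ℝ)) = 0), Ioo (p.1 : ℝ) (p.2 : ℝ) with hN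
  have hNnull : ν N = 0 := by
    refine measure_iUnion_null fun p => ?_
    refine measure_iUnion_null fun hp => hp
  rw [ae_iff]
  refine measure_mono_null ?_ hNnull
  intro t ht
  simp only [mem_setOf_eq] at ht
  push_neg at ht
  obtain ⟨h, hh, hball⟩ := ht
  have hball0 : ν (ball t h) = 0 := le_antisymm hball zero_le
  obtain ⟨q1, hq1, hq1'⟩ := exists_rat_btwn (show t - h < t by linarith)
  obtain ⟨q2, hq2, hq2'⟩ := exists_rat_btwn (show t < t + h by linarith)
  have hsub : Ioo (q1 : ℝ) (q2 : ℝ) ⊆ ball t h := by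
    rw [Real.ball_eq_Ioo]
    exact Ioo_subset_Ioo hq1.le hq2'.le
  refine mem_iUnion.2 ⟨(q1, q2), mem_iUnion.2 ⟨measure_mono_null hsub hball0, ?_⟩⟩
  exact ⟨hq1', hq2⟩

lemma ball_tendsto_of_closedBall {ν : Measure ℝ} [IsFiniteMeasure ν] {f : ℝ → ℝ}
    (hf : Integrable f ν) {t L : ℝ}
    (hpos : ∀ h : ℝ, 0 < h → 0 < ν (ball t h))
    (hG : Tendsto (fun r => (∫ s in closedBall t r, f s ∂ν) / (ν (closedBall t r)).toReal)
      (𝓝[>] 0) (𝓝 L)) :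
    Tendsto (fun h => (∫ s in ball t h, f s ∂ν) / (ν (ball t h)).toReal)
      (𝓝[>] 0) (𝓝 L) := by
  rw [Metric.tendsto_nhdsWithin_nhds] at hG ⊢
  intro ε hε
  obtain ⟨δ, hδ, hG'⟩ := hG (ε / 2) (by positivity)
  refine ⟨δ, hδ, ?_⟩
  intro h hh hhd
  rw [mem_Ioi] at hh
  rw [Real.dist_eq, sub_zero, abs_of_pos hh] at hhd
  set r : ℕ → ℝ := fun n => h - h / (n + 2) with hr
  have hrpos : ∀ n, 0 < r n := by
    intro n
    have h1 : h / (n + 2) < h := by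
      rw [div_lt_iff₀ (by positivity)]
      nlinarith [Nat.cast_nonneg (α := ℝ) n]
    simpa [hr] using sub_pos.2 h1
  have hrlt : ∀ n, r n < h := fun n => by
    have : 0 < h / (n + 2) := by positivity
    simp only [hr]; linarith
  have hrmono : Monotone r := by
    intro a b hab
    have hc : (a : ℝ) ≤ b := Nat.cast_le.2 hab
    have : h / (b + 2) ≤ h / (a + 2) := by
      apply div_le_div_of_nonneg_left hh.le (by positivity) (by linarith)
    simp only [hr]; linarith
  have hmonoS : Monotone fun n => closedBall t (r n) := fun a b hab =>
    closedBall_subset_closedBall (hrmono hab)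
  have hUnion : (⋃ n, closedBall t (r n)) = ball t h := by
    apply subset_antisymm
    · exact iUnion_subset fun n => closedBall_subset_ball (hrlt n)
    · intro x hx
      rw [mem_ball] at hx
      obtain ⟨n, hn⟩ := exists_nat_gt (h / (h - dist x t))
      refine mem_iUnion.2 ⟨n, ?_⟩
      rw [mem_closedBall]
      have hd : 0 < h - dist x t := by linarith
      have : h / (n + 2) ≤ h - dist x t := by
        rw [div_le_iff₀ (by positivity)]
        have h2 : h / (h - dist x t) ≤ n := hn.le
        rw [div_le_iff₀ hd] at h2
        nlinarith
      simp only [hr]; linarith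
  have hNum : Tendsto (fun n => ∫ s in closedBall t (r n), f s ∂ν) atTop
      (𝓝 (∫ s in ball t h, f s ∂ν)) := by
    rw [← hUnion]
    exact tendsto_setIntegral_of_monotone (fun n => measurableSet_closedBall) hmonoS
      (hUnion ▸ hf.integrableOn)
  have hDen : Tendsto (fun n => (ν (closedBall t (r n))).toReal) atTop
      (𝓝 ((ν (ball t h)).toReal)) := by
    have h1 : Tendsto (fun n => ν (closedBall t (r n))) atTop (𝓝 (ν (ball t h))) := by
      rw [← hUnion]
      exact tendsto_measure_iUnion_atTop hmonoS
    exact (ENNReal.tendsto_toReal (measure_ne_top ν _)).comp h1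
  have hden_ne : (ν (ball t h)).toReal ≠ 0 :=
    (ENNReal.toReal_pos (hpos h hh).ne' (measure_ne_top ν _)).ne'
  have hQ : Tendsto (fun n => (∫ s in closedBall t (r n), f s ∂ν) /
      (ν (closedBall t (r n))).toReal) atTop
      (𝓝 ((∫ s in ball t h, f s ∂ν) / (ν (ball t h)).toReal)) := hNum.div hDen hden_ne
  have hdn : ∀ n, dist ((∫ s in closedBall t (r n), f s ∂ν) /
      (ν (closedBall t (r n))).toReal) L ≤ ε / 2 := by
    intro n
    refine (hG' (mem_Ioi.2 (hrpos n)) ?_).le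
    rw [Real.dist_eq, sub_zero, abs_of_pos (hrpos n)]
    linarith [hrlt n]
  have hfinal : dist ((∫ s in ball t h, f s ∂ν) / (ν (ball t h)).toReal) L ≤ ε / 2 :=
    le_of_tendsto (hQ.dist tendsto_const_nhds) (Eventually.of_forall hdn)
  linarith


lemma exists_dense_family (X : Type*) [NormedAddCommGroup X] [ProperSpace X]
    [SecondCountableTopology X] :
    ∃ D : Set (X → ℝ), D.Countable ∧ (∀ ψ ∈ D, Continuous ψ ∧ HasCompactSupport ψ) ∧
      ∀ φ : X → ℝ, Continuous φ → HasCompactSupport φ → ∀ ε : ℝ, 0 < ε →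
        ∃ ψ ∈ D, ∀ z, |φ z - ψ z| ≤ ε := by
  set K : ℕ → Set X := fun n => closedBall 0 ((n : ℝ) + 2) with hK
  have hKcl : ∀ n, IsClosed (K n) := fun n => isClosed_closedBall
  have hKcp : ∀ n, CompactSpace (K n) := fun n =>
    isCompact_iff_compactSpace.mp (isCompact_closedBall _ _)
  have hsep : ∀ n, ∃ S : Set C((K n : Set X), ℝ), S.Countable ∧ Dense S := by
    intro n
    haveI := hKcp n
    exact TopologicalSpace.exists_countable_dense _
  choose S hSc hSd using hsep
  have hext : ∀ n (g : C((K n : Set X), ℝ)), ∃ g' : C(X, ℝ), g'.restrict (K n) = g :=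
    fun n g => g.exists_restrict_eq (hKcl n)
  choose ext hextP using hext
  set Ψ : ∀ n, C((K n : Set X), ℝ) → (X → ℝ) :=
    fun n g => fun z => ext n g z * cutoff n z with hΨ
  refine ⟨⋃ n, Ψ n '' S n, countable_iUnion fun n => (hSc n).image _, ?_, ?_⟩
  · intro ψ hψ
    obtain ⟨n, g, _, rfl⟩ := by simpa [mem_iUnion] using hψ
    exact ⟨((ext n g).continuous).mul (cutoff_cont n),
      HasCompactSupport.mul_left (cutoff_hcs n)⟩
  · intro φ hφc hφs ε hε
    obtain ⟨R, hR⟩ := hφs.isBounded.subset_closedBall 0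
    obtain ⟨n, hn⟩ := exists_nat_ge R
    have htsupp : tsupport φ ⊆ closedBall 0 ((n : ℝ) + 1) :=
      hR.trans (closedBall_subset_closedBall (by linarith))
    set φK : C((K n : Set X), ℝ) := (ContinuousMap.mk φ hφc).restrict (K n) with hφK
    haveI := hKcp n
    obtain ⟨g, hgS, hgd⟩ := (hSd n).exists_dist_lt φK hε
    refine ⟨Ψ n g, mem_iUnion.2 ⟨n, mem_image_of_mem _ hgS⟩, ?_⟩
    intro z
    by_cases hz : ‖z‖ ≤ (n : ℝ) + 2
    · have hzK : z ∈ K n := by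
        simp only [hK, mem_closedBall, dist_zero_right]; exact hz
      have hgz : ext n g z = g ⟨z, hzK⟩ := by
        have := DFunLike.congr_fun (hextP n g) (⟨z, hzK⟩ : (K n : Set X))
        simpa [ContinuousMap.restrict_apply] using this
      have hdist : |g ⟨z, hzK⟩ - φ z| ≤ ε := by
        have h1 : dist (φK ⟨z, hzK⟩) (g ⟨z, hzK⟩) ≤ dist φK g :=
          ContinuousMap.dist_apply_le_dist _
      -- dist g φK might be dist φK g; careful
        have h2 : φK ⟨z, hzK⟩ = φ z := by
          simp [hφK, ContinuousMap.restrict_apply]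
        calc |g ⟨z, hzK⟩ - φ z| = dist (φK ⟨z, hzK⟩) (g ⟨z, hzK⟩) := by
              rw [h2, Real.dist_eq, abs_sub_comm]
          _ ≤ dist φK g := h1
          _ ≤ ε := hgd.le
      by_cases hc : ‖z‖ ≤ (n : ℝ) + 1
      · have h1 : cutoff n z = 1 := cutoff_one z hc
        simp only [hΨ, h1, mul_one, hgz]
        rw [abs_sub_comm]
        exact hdist
      · have hφz : φ z = 0 := image_eq_zero_of_notMem_tsupport fun hmem => hc
          (by simpa [mem_closedBall, dist_zero_right] using htsupp hmem)
        have hgle : |g ⟨z, hzK⟩| ≤ ε := by simpa [hφz] using hdist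
        simp only [hΨ, hφz, hgz, zero_sub, abs_neg, abs_mul]
        calc |g ⟨z, hzK⟩| * |cutoff n z| ≤ ε * 1 := by
              apply mul_le_mul hgle ?_ (abs_nonneg _) hε.le
              rw [abs_of_nonneg (cutoff_nonneg n z)]
              exact cutoff_le_one n z
          _ = ε := mul_one ε
    · have hφz : φ z = 0 := image_eq_zero_of_notMem_tsupport fun hmem => hz
        (by
          have := htsupp hmem
          simp only [mem_closedBall, dist_zero_right] at this
          linarith)
      have hcz : cutoff n z = 0 := cutoff_zero n (by linarith)
      simp [hΨ, hφz, hcz, hε.le]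


section Key
variable {Y : Type*} [NormedAddCommGroup Y] [ProperSpace Y] [MeasurableSpace Y] [BorelSpace Y]
  [SecondCountableTopology Y]
  {ν : Measure ℝ} [IsFiniteMeasure ν] {μt : ℝ → Measure (ℝ × Y)}
  {μ : Measure (ℝ × Y)} [IsFiniteMeasure μ]

lemma key_identity
    (hborel : ∀ φ : ℝ × Y → ℝ, Continuous φ → HasCompactSupport φ →
      Measurable fun t => ∫ z, φ z ∂(μt t))
    (hfib : ∀ᵐ t ∂ν, μt t Set.univ < ⊤ ∧
      μt t (({t} ×ˢ (Set.univ : Set Y))ᶜ) = 0)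
    (hdisint : ∀ A : Set (ℝ × Y), MeasurableSet A → μ A = ∫⁻ t, μt t A ∂ν)
    {φ : ℝ × Y → ℝ} (hφc : Continuous φ) (hφs : HasCompactSupport φ) :
    Integrable (fun t => ∫ z, φ z ∂μt t) ν ∧
      ∀ S : Set ℝ, MeasurableSet S →
        ∫ t in S, (∫ z, φ z ∂μt t) ∂ν = ∫ z in S ×ˢ (univ : Set Y), φ z ∂μ := by
  have hfin : ∀ᵐ t ∂ν, μt t univ < ⊤ := hfib.mono fun t ht => ht.1
  -- nonneg case
  have keyNN : ∀ ψ : ℝ × Y → ℝ, Continuous ψ → HasCompactSupport ψ → (∀ z, 0 ≤ ψ z) →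
      Integrable (fun t => ∫ z, ψ z ∂μt t) ν ∧
      ∀ S : Set ℝ, MeasurableSet S →
        ∫ t in S, (∫ z, ψ z ∂μt t) ∂ν = ∫ z in S ×ˢ (univ : Set Y), ψ z ∂μ := by
    intro ψ hc hs hnn
    set H : ℝ → ℝ := fun t => ∫ z, ψ z ∂μt t with hH
    have hHmeas : Measurable H := hborel ψ hc hs
    have hHnn : ∀ t, 0 ≤ H t := fun t => integral_nonneg hnn
    have hψm : Measurable ψ := hc.measurable
    have hψe : Measurable fun z => ENNReal.ofReal (ψ z) := hψm.ennreal_ofReal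
    have hψint : Integrable ψ μ := hc.integrable_of_hasCompactSupport hs
    have hofReal : ∀ᵐ t ∂ν, ENNReal.ofReal (H t) = ∫⁻ z, ENNReal.ofReal (ψ z) ∂μt t := by
      filter_upwards [hfin] with t ht
      haveI : IsFiniteMeasure (μt t) := ⟨ht⟩
      exact ofReal_integral_eq_lintegral_ofReal
        (hc.integrable_of_hasCompactSupport hs) (Eventually.of_forall hnn)
    have hlint := lint_eq hborel hfin μ hdisint hψe
    -- finiteness of the full lintegral
    have hfull : ∫⁻ z, ENNReal.ofReal (ψ z) ∂μ < ⊤ := by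
      refine lt_of_le_of_lt ?_ hψint.2
      refine lintegral_mono fun z => ?_
      rw [← ofReal_norm]
      exact ENNReal.ofReal_le_ofReal (le_abs_self _)
    -- integrability of H
    have hHint : Integrable H ν := by
      refine ⟨hHmeas.aestronglyMeasurable, ?_⟩
      rw [hasFiniteIntegral_iff_norm]
      have : ∫⁻ t, ENNReal.ofReal ‖H t‖ ∂ν = ∫⁻ t, ENNReal.ofReal (H t) ∂ν :=
        lintegral_congr fun t => by rw [Real.norm_of_nonneg (hHnn t)]
      rw [this, lintegral_congr_ae hofReal, ← hlint.2]
      exact hfull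
    refine ⟨hHint, ?_⟩
    intro S hS
    have hSu : MeasurableSet (S ×ˢ (univ : Set Y)) := hS.prod MeasurableSet.univ
    have hind : Measurable fun z => (S ×ˢ (univ : Set Y)).indicator
        (fun z => ENNReal.ofReal (ψ z)) z := hψe.indicator hSu
    have hlintS := lint_eq hborel hfin μ hdisint hind
    have con : ∀ᵐ t ∂ν, ∫⁻ z, (S ×ˢ (univ : Set Y)).indicator
        (fun z => ENNReal.ofReal (ψ z)) z ∂μt t
        = S.indicator (fun t => ∫⁻ z, ENNReal.ofReal (ψ z) ∂μt t) t := by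
      filter_upwards [hfib] with t ht
      by_cases hts : t ∈ S
      · rw [indicator_of_mem hts]
        apply lintegral_congr_ae
        have hmem : ∀ᵐ z ∂μt t, z ∈ S ×ˢ (univ : Set Y) := by
          rw [ae_iff]
          refine measure_mono_null ?_ ht.2
          intro z hz
          simp only [mem_setOf_eq] at hz
          simp only [mem_compl_iff, mem_prod, mem_singleton_iff, mem_univ, and_true]
          intro hz1
          exact hz ⟨hz1 ▸ hts, mem_univ _⟩
        filter_upwards [hmem] with z hz
        rw [indicator_of_mem hz]
      · rw [indicator_of_notMem hts]
        have hzero : μt t (S ×ˢ (univ : Set Y)) = 0 := by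
          refine measure_mono_null ?_ ht.2
          intro z hz
          simp only [mem_compl_iff, mem_prod, mem_singleton_iff, mem_univ, and_true]
          intro hz1
          exact hts (hz1 ▸ hz.1)
        rw [lintegral_indicator hSu, Measure.restrict_eq_zero.2 hzero, lintegral_zero_measure]
    calc ∫ t in S, H t ∂ν
        = (∫⁻ t in S, ENNReal.ofReal (H t) ∂ν).toReal := by
          rw [integral_eq_lintegral_of_nonneg_ae (Eventually.of_forall fun t => hHnn t)
            hHmeas.aestronglyMeasurable.restrict]
      _ = (∫⁻ t in S, (∫⁻ z, ENNReal.ofReal (ψ z) ∂μt t) ∂ν).toReal := by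
          congr 1
          exact lintegral_congr_ae (ae_restrict_of_ae hofReal)
      _ = (∫⁻ t, S.indicator (fun t => ∫⁻ z, ENNReal.ofReal (ψ z) ∂μt t) t ∂ν).toReal := by
          rw [lintegral_indicator hS]
      _ = (∫⁻ t, ∫⁻ z, (S ×ˢ (univ : Set Y)).indicator
            (fun z => ENNReal.ofReal (ψ z)) z ∂μt t ∂ν).toReal := by
          congr 1
          exact (lintegral_congr_ae con).symm
      _ = (∫⁻ z, (S ×ˢ (univ : Set Y)).indicator (fun z => ENNReal.ofReal (ψ z)) z ∂μ).toReal := by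
          rw [hlintS.2]
      _ = (∫⁻ z in S ×ˢ (univ : Set Y), ENNReal.ofReal (ψ z) ∂μ).toReal := by
          rw [lintegral_indicator hSu]
      _ = ∫ z in S ×ˢ (univ : Set Y), ψ z ∂μ := by
          rw [integral_eq_lintegral_of_nonneg_ae (Eventually.of_forall fun z => hnn z)
            hc.measurable.aestronglyMeasurable.restrict]
  -- general case
  set φp : ℝ × Y → ℝ := fun z => max (φ z) 0 with hφp
  set φn : ℝ × Y → ℝ := fun z => max (-φ z) 0 with hφn
  have hφpc : Continuous φp := hφc.max continuous_const
  have hφnc : Continuous φn := hφc.neg.max continuous_const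
  have hφps : HasCompactSupport φp := hφs.comp_left (g := fun x => max x 0) (by simp)
  have hφns : HasCompactSupport φn := hφs.comp_left (g := fun x => max (-x) 0) (by simp)
  have hφpnn : ∀ z, 0 ≤ φp z := fun z => le_max_right _ _
  have hφnnn : ∀ z, 0 ≤ φn z := fun z => le_max_right _ _
  have hsub : ∀ z, φ z = φp z - φn z := fun z => (max_zero_sub_max_neg_zero_eq_self (φ z)).symm
  obtain ⟨hIp, hEp⟩ := keyNN φp hφpc hφps hφpnn
  obtain ⟨hIn, hEn⟩ := keyNN φn hφnc hφns hφnnn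
  have hae : ∀ᵐ t ∂ν, (∫ z, φ z ∂μt t) = (∫ z, φp z ∂μt t) - (∫ z, φn z ∂μt t) := by
    filter_upwards [hfin] with t ht
    haveI : IsFiniteMeasure (μt t) := ⟨ht⟩
    rw [← integral_sub (hφpc.integrable_of_hasCompactSupport hφps)
      (hφnc.integrable_of_hasCompactSupport hφns)]
    exact integral_congr_ae (Eventually.of_forall fun z => hsub z)
  constructor
  · exact (hIp.sub hIn).congr (hae.mono fun t ht => ht.symm)
  · intro S hS
    have hint_p : Integrable φp μ := hφpc.integrable_of_hasCompactSupport hφps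
    have hint_n : Integrable φn μ := hφnc.integrable_of_hasCompactSupport hφns
    calc ∫ t in S, (∫ z, φ z ∂μt t) ∂ν
        = ∫ t in S, ((∫ z, φp z ∂μt t) - (∫ z, φn z ∂μt t)) ∂ν :=
          integral_congr_ae (ae_restrict_of_ae hae)
      _ = (∫ t in S, (∫ z, φp z ∂μt t) ∂ν) - ∫ t in S, (∫ z, φn z ∂μt t) ∂ν :=
          integral_sub hIp.integrableOn hIn.integrableOn
      _ = (∫ z in S ×ˢ (univ : Set Y), φp z ∂μ) - ∫ z in S ×ˢ (univ : Set Y), φn z ∂μ := by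
          rw [hEp S hS, hEn S hS]
      _ = ∫ z in S ×ˢ (univ : Set Y), (φp z - φn z) ∂μ :=
          (integral_sub hint_p.integrableOn hint_n.integrableOn).symm
      _ = ∫ z in S ×ˢ (univ : Set Y), φ z ∂μ :=
          integral_congr_ae (Eventually.of_forall fun z => (hsub z).symm)
end Key


/-- Differentiation of an integrable function: a.e. convergence of averages over closed balls. -/
lemma besic_avg {ν : Measure ℝ} [IsFiniteMeasure ν] {f : ℝ → ℝ} (hf : Integrable f ν) :
    ∀ᵐ t ∂ν, Tendsto (fun r =>
      (∫ s in closedBall t r, f s ∂ν) / (ν (closedBall t r)).toReal) (𝓝[>] 0) (𝓝 (f t)) := by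
  filter_upwards [(Besicovitch.vitaliFamily ν).ae_tendsto_average hf.locallyIntegrable] with t ht
  have h2 := ht.comp (Besicovitch.tendsto_filterAt ν t)
  refine Tendsto.congr ?_ h2
  intro r
  simp only [Function.comp_apply, setAverage_eq, smul_eq_mul, div_eq_inv_mul, measureReal_def]

/-- Explicit characterisation of a disintegration: if `(μt t)` is a disintegration of
the finite measure `μ` on `ℝ × ℝ^d` with respect to the time projection and the finite
measure `ν` on `ℝ`, then for `ν`-a.e. `t` the normalized restrictions of `μ` to the
slabs `(t-h, t+h) × ℝ^d` converge weakly to `μt t` as `h → 0⁺`. -/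
theorem stmt5 {d : ℕ}
    (μ : Measure (ℝ × EuclideanSpace ℝ (Fin d))) [IsFiniteMeasure μ]
    (ν : Measure ℝ) [IsFiniteMeasure ν]
    (μt : ℝ → Measure (ℝ × EuclideanSpace ℝ (Fin d)))
    (hborel : ∀ φ : ℝ × EuclideanSpace ℝ (Fin d) → ℝ,
      Continuous φ → HasCompactSupport φ →
      Measurable fun t => ∫ z, φ z ∂(μt t))
    (hfib : ∀ᵐ t ∂ν, μt t Set.univ < ⊤ ∧
      μt t (({t} ×ˢ (Set.univ : Set (EuclideanSpace ℝ (Fin d))))ᶜ) = 0)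
    (hdisint : ∀ A : Set (ℝ × EuclideanSpace ℝ (Fin d)), MeasurableSet A →
      μ A = ∫⁻ t, μt t A ∂ν) :
    ∀ᵐ t ∂ν,
      (∀ h : ℝ, 0 < h → 0 < ν (Set.Ioo (t - h) (t + h))) ∧
      ∀ φ : ℝ × EuclideanSpace ℝ (Fin d) → ℝ, Continuous φ → HasCompactSupport φ →
        Filter.Tendsto
          (fun h : ℝ =>
            (∫ z in (Set.Ioo (t - h) (t + h)) ×ˢ (Set.univ : Set (EuclideanSpace ℝ (Fin d))),
                φ z ∂μ)
              / (ν (Set.Ioo (t - h) (t + h))).toReal)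
          (nhdsWithin 0 (Set.Ioi 0)) (nhds (∫ z, φ z ∂(μt t))) := by
  set E := ℝ × EuclideanSpace ℝ (Fin d)
  have hfin : ∀ᵐ t ∂ν, μt t univ < ⊤ := hfib.mono fun t ht => ht.1
  -- countable dense family
  obtain ⟨D, hDc, hDprop, hDapprox⟩ := exists_dense_family E
  -- convergence for each member of D
  have convD : ∀ ψ ∈ D, ∀ᵐ t ∂ν,
      Tendsto (fun h : ℝ =>
        (∫ z in (Set.Ioo (t - h) (t + h)) ×ˢ (Set.univ : Set (EuclideanSpace ℝ (Fin d))),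
            ψ z ∂μ) / (ν (Set.Ioo (t - h) (t + h))).toReal)
        (𝓝[>] 0) (𝓝 (∫ z, ψ z ∂(μt t))) := by
    intro ψ hψD
    obtain ⟨hψc, hψs⟩ := hDprop ψ hψD
    obtain ⟨hInt, hId⟩ := key_identity hborel hfib hdisint hψc hψs
    filter_upwards [besic_avg hInt, ae_ball_pos ν] with t hcb hpos
    have hball := ball_tendsto_of_closedBall hInt hpos hcb
    refine Tendsto.congr ?_ hball
    intro h
    rw [Real.ball_eq_Ioo, hId _ measurableSet_Ioo]
  -- the mass function
  have hmass : ∃ g : ℝ → ℝ, Integrable g ν ∧ (∀ᵐ t ∂ν, g t = (μt t univ).toReal) ∧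
      ∀ S : Set ℝ, MeasurableSet S →
        ∫ t in S, g t ∂ν = (μ (S ×ˢ (univ : Set (EuclideanSpace ℝ (Fin d))))).toReal := by
    have hae := aemeas_set hborel hfin (MeasurableSet.univ (α := E))
    set G₀ := hae.mk _ with hG₀
    set g : ℝ → ℝ := fun t => (G₀ t).toReal with hg
    have hgmeas : Measurable g := hae.measurable_mk.ennreal_toReal
    have hgae : ∀ᵐ t ∂ν, g t = (μt t univ).toReal := by
      filter_upwards [hae.ae_eq_mk] with t ht
      exact congrArg ENNReal.toReal ht.symm
    have hG₀ae : ∀ᵐ t ∂ν, G₀ t = μt t univ := hae.ae_eq_mk.symm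
    have hof : ∀ᵐ t ∂ν, ENNReal.ofReal (g t) = μt t univ := by
      filter_upwards [hG₀ae, hfin] with t h1 h2
      have : g t = (μt t univ).toReal := congrArg ENNReal.toReal h1
      rw [this, ENNReal.ofReal_toReal h2.ne]
    have hgnn : ∀ t, 0 ≤ g t := fun t => ENNReal.toReal_nonneg
    have hcon : ∀ S : Set ℝ, MeasurableSet S →
        ∫⁻ t in S, ENNReal.ofReal (g t) ∂ν
          = μ (S ×ˢ (univ : Set (EuclideanSpace ℝ (Fin d)))) := by
      intro S hS
      have hconS : ∀ᵐ t ∂ν, μt t (S ×ˢ (univ : Set (EuclideanSpace ℝ (Fin d))))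
          = S.indicator (fun t => μt t univ) t := by
        filter_upwards [hfib] with t ht
        by_cases hts : t ∈ S
        · rw [indicator_of_mem hts]
          have hsub : ({t} : Set ℝ) ×ˢ (univ : Set (EuclideanSpace ℝ (Fin d)))
              ⊆ S ×ˢ univ := prod_mono (singleton_subset_iff.2 hts) (subset_refl _)
          have hcompl : μt t ((S ×ˢ (univ : Set (EuclideanSpace ℝ (Fin d))))ᶜ) = 0 :=
            measure_mono_null (compl_subset_compl.2 hsub) ht.2
          have := measure_add_measure_compl
            (μ := μt t) ((hS.prod MeasurableSet.univ))
          rw [hcompl, add_zero] at this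
          exact this
        · rw [indicator_of_notMem hts]
          refine measure_mono_null ?_ ht.2
          intro z hz
          rw [mem_prod] at hz
          rw [mem_compl_iff, mem_prod]
          intro hc
          rw [mem_singleton_iff] at hc
          exact hts (hc.1 ▸ hz.1)
      rw [hdisint _ (hS.prod MeasurableSet.univ)]
      calc ∫⁻ t in S, ENNReal.ofReal (g t) ∂ν
          = ∫⁻ t in S, μt t univ ∂ν := lintegral_congr_ae (ae_restrict_of_ae hof)
        _ = ∫⁻ t, S.indicator (fun t => μt t univ) t ∂ν := (lintegral_indicator hS _).symm
        _ = ∫⁻ t, μt t (S ×ˢ (univ : Set (EuclideanSpace ℝ (Fin d)))) ∂ν :=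
            (lintegral_congr_ae hconS).symm
    have hgint : Integrable g ν := by
      refine ⟨hgmeas.aestronglyMeasurable, ?_⟩
      rw [hasFiniteIntegral_iff_norm]
      have heq : ∫⁻ t, ENNReal.ofReal ‖g t‖ ∂ν = ∫⁻ t, ENNReal.ofReal (g t) ∂ν :=
        lintegral_congr fun t => by rw [Real.norm_of_nonneg (hgnn t)]
      rw [heq]
      have := hcon univ MeasurableSet.univ
      rw [Measure.restrict_univ] at this
      rw [this]
      exact measure_lt_top μ _
    refine ⟨g, hgint, hgae, ?_⟩
    intro S hS
    rw [integral_eq_lintegral_of_nonneg_ae (Eventually.of_forall hgnn)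
      hgmeas.aestronglyMeasurable.restrict, hcon S hS]
  obtain ⟨g, hgint, hgae, hgid⟩ := hmass
  -- mass convergence
  have massConv : ∀ᵐ t ∂ν,
      Tendsto (fun h : ℝ =>
        (μ ((Set.Ioo (t - h) (t + h)) ×ˢ (univ : Set (EuclideanSpace ℝ (Fin d))))).toReal
          / (ν (Set.Ioo (t - h) (t + h))).toReal)
        (𝓝[>] 0) (𝓝 ((μt t univ).toReal)) := by
    filter_upwards [besic_avg hgint, ae_ball_pos ν, hgae] with t hcb hpos hgt
    have hball := ball_tendsto_of_closedBall hgint hpos hcb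
    rw [hgt] at hball
    refine Tendsto.congr ?_ hball
    intro h
    rw [Real.ball_eq_Ioo, hgid _ measurableSet_Ioo]
  -- assemble
  have hDconv : ∀ᵐ t ∂ν, ∀ ψ ∈ D,
      Tendsto (fun h : ℝ =>
        (∫ z in (Set.Ioo (t - h) (t + h)) ×ˢ (Set.univ : Set (EuclideanSpace ℝ (Fin d))),
            ψ z ∂μ) / (ν (Set.Ioo (t - h) (t + h))).toReal)
        (𝓝[>] 0) (𝓝 (∫ z, ψ z ∂(μt t))) := (ae_ball_iff hDc).2 convD
  filter_upwards [ae_ball_pos ν, massConv, hDconv, hfin] with t hpos hmassC hDC hfint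
  have hposIoo : ∀ h : ℝ, 0 < h → 0 < ν (Set.Ioo (t - h) (t + h)) := by
    intro h hh
    rw [← Real.ball_eq_Ioo]
    exact hpos h hh
  refine ⟨hposIoo, ?_⟩
  intro φ hφc hφs
  haveI : IsFiniteMeasure (μt t) := ⟨hfint⟩
  rw [Metric.tendsto_nhds]
  intro ε hε
  set m : ℝ := (μt t univ).toReal with hm
  have hm0 : 0 ≤ m := ENNReal.toReal_nonneg
  set δ : ℝ := ε / (3 * (m + 2)) with hδ
  have hδ0 : 0 < δ := by positivity
  obtain ⟨ψ, hψD, hψclose⟩ := hDapprox φ hφc hφs δ hδ0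
  obtain ⟨hψc, hψs⟩ := hDprop ψ hψD
  -- limit difference
  have hlimdiff : |(∫ z, φ z ∂μt t) - (∫ z, ψ z ∂μt t)| ≤ δ * m := by
    have hintφ : Integrable φ (μt t) := hφc.integrable_of_hasCompactSupport hφs
    have hintψ : Integrable ψ (μt t) := hψc.integrable_of_hasCompactSupport hψs
    rw [← integral_sub hintφ hintψ]
    have := norm_integral_le_of_norm_le_const (μ := μt t)
      (f := fun z => φ z - ψ z) (C := δ) (Eventually.of_forall fun z => by
        rw [Real.norm_eq_abs]; exact hψclose z)
    rw [Real.norm_eq_abs] at this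
    calc |∫ z, (φ z - ψ z) ∂μt t| ≤ δ * (μt t univ).toReal := this
      _ = δ * m := rfl
  -- eventual bounds
  have hev1 : ∀ᶠ h : ℝ in 𝓝[>] 0,
      dist ((μ ((Set.Ioo (t - h) (t + h)) ×ˢ
        (univ : Set (EuclideanSpace ℝ (Fin d))))).toReal
        / (ν (Set.Ioo (t - h) (t + h))).toReal) m < 1 :=
    Metric.tendsto_nhds.1 hmassC 1 one_pos
  have hev2 : ∀ᶠ h : ℝ in 𝓝[>] 0,
      dist ((∫ z in (Set.Ioo (t - h) (t + h)) ×ˢ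
        (Set.univ : Set (EuclideanSpace ℝ (Fin d))), ψ z ∂μ)
        / (ν (Set.Ioo (t - h) (t + h))).toReal) (∫ z, ψ z ∂μt t) < ε / 3 :=
    Metric.tendsto_nhds.1 (hDC ψ hψD) (ε / 3) (by positivity)
  filter_upwards [hev1, hev2, self_mem_nhdsWithin] with h h1 h2 hh
  rw [mem_Ioi] at hh
  set I := Set.Ioo (t - h) (t + h) with hI
  set Iu := I ×ˢ (univ : Set (EuclideanSpace ℝ (Fin d))) with hIu
  set c : ℝ := (ν I).toReal with hc
  have hc0 : 0 < c := ENNReal.toReal_pos (hposIoo h hh).ne' (measure_ne_top ν _)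
  -- numerator difference bound
  have hnum : |(∫ z in Iu, φ z ∂μ) - ∫ z in Iu, ψ z ∂μ| ≤ δ * (μ Iu).toReal := by
    have hintφ : IntegrableOn φ Iu μ :=
      (hφc.integrable_of_hasCompactSupport hφs).integrableOn
    have hintψ : IntegrableOn ψ Iu μ :=
      (hψc.integrable_of_hasCompactSupport hψs).integrableOn
    rw [← integral_sub hintφ hintψ]
    have := norm_integral_le_of_norm_le_const (μ := μ.restrict Iu)
      (f := fun z => φ z - ψ z) (C := δ) (Eventually.of_forall fun z => by
        rw [Real.norm_eq_abs]; exact hψclose z)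
    rw [Real.norm_eq_abs, measureReal_restrict_apply_univ, measureReal_def] at this
    exact this
  have hMle : (μ Iu).toReal / c ≤ m + 1 := by
    rw [Real.dist_eq] at h1
    have habs := abs_lt.1 h1
    linarith [habs.2]
  have hq : |(∫ z in Iu, φ z ∂μ) / c - (∫ z in Iu, ψ z ∂μ) / c| ≤ δ * (m + 1) := by
    rw [div_sub_div_same, abs_div, abs_of_pos hc0]
    calc |(∫ z in Iu, φ z ∂μ) - ∫ z in Iu, ψ z ∂μ| / c
        ≤ δ * (μ Iu).toReal / c := by gcongr
      _ = δ * ((μ Iu).toReal / c) := by ring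
      _ ≤ δ * (m + 1) := mul_le_mul_of_nonneg_left hMle hδ0.le
  have hδ1 : δ * (m + 1) ≤ ε / 3 := by
    rw [hδ, div_mul_eq_mul_div, div_le_div_iff₀ (by positivity) (by norm_num : (0:ℝ) < 3)]
    nlinarith [hε.le, hm0]
  have hδ2 : δ * m ≤ ε / 3 := by
    rw [hδ, div_mul_eq_mul_div, div_le_div_iff₀ (by positivity) (by norm_num : (0:ℝ) < 3)]
    nlinarith [hε.le, hm0]
  rw [Real.dist_eq] at h2 ⊢
  have tri : |(∫ z in Iu, φ z ∂μ) / c - ∫ z, φ z ∂μt t|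
      ≤ |(∫ z in Iu, φ z ∂μ) / c - (∫ z in Iu, ψ z ∂μ) / c|
        + |(∫ z in Iu, ψ z ∂μ) / c - ∫ z, ψ z ∂μt t|
        + |(∫ z, ψ z ∂μt t) - ∫ z, φ z ∂μt t| := by
    have t1 := abs_sub_le ((∫ z in Iu, φ z ∂μ) / c) ((∫ z in Iu, ψ z ∂μ) / c)
      (∫ z, φ z ∂μt t)
    have t2 := abs_sub_le ((∫ z in Iu, ψ z ∂μ) / c) (∫ z, ψ z ∂μt t)
      (∫ z, φ z ∂μt t)
    linarith
  have hlim' : |(∫ z, ψ z ∂μt t) - ∫ z, φ z ∂μt t| ≤ δ * m := by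
    rw [abs_sub_comm]; exact hlimdiff
  linarith
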